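/- arXiv:1508.04106 — 5 statements merged into one kernel-verified Lean document; each statement's English description precedes it below -/
import Mathlib

section
/- Let D ⊆ ℝ² be a bounded open set, let x₀ ∈ D, let u₊, u₋ > 0, let r : ℝ → ℝ be continuous and 2π-periodic, and let (r_k)_{k≥1} be a sequence of continuous 2π-periodic functions on ℝ with ‖r_k − r‖_∞ → 0 as k → ∞. Then F₂(r_k, x₀) converges to F₂(r, x₀) in Lebesgue measure on D, i.e. for every δ > 0 the Lebesgue measure of {x ∈ D : |F₂(r_k, x₀)(x) − F₂(r, x₀)(x)| > δ} tends to 0 as k → ∞. -/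
open MeasureTheory Filter

/-- The angular polar coordinate of a point in the plane (the argument of the
corresponding complex number, taking values in `(-π, π]`). -/
noncomputable def polarAngle (x : EuclideanSpace ℝ (Fin 2)) : ℝ :=
  Complex.arg ⟨x 0, x 1⟩

/-- The star-shaped inclusion `A(r, x₀) = {x ∈ D : |x − x₀| ≤ r(h(x − x₀))}`. -/
def starSet (D : Set (EuclideanSpace ℝ (Fin 2))) (r : ℝ → ℝ)
    (x₀ : EuclideanSpace ℝ (Fin 2)) : Set (EuclideanSpace ℝ (Fin 2)) :=
  {x | x ∈ D ∧ ‖x - x₀‖ ≤ r (polarAngle (x - x₀))}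

/-- The star-shaped conductivity `F₂(r, x₀) = (u₊ − u₋)·𝟙_{A(r,x₀)} + u₋`. -/
noncomputable def starF (D : Set (EuclideanSpace ℝ (Fin 2))) (uplus uminus : ℝ)
    (r : ℝ → ℝ) (x₀ : EuclideanSpace ℝ (Fin 2)) (x : EuclideanSpace ℝ (Fin 2)) : ℝ :=
  (uplus - uminus) * (starSet D r x₀).indicator (fun _ => (1 : ℝ)) x + uminus

open Set in
/-- The "polar graph" `{p | p.1 = r p.2}` in `ℝ × ℝ` is a null set. -/
lemma polarGraph_null (r : ℝ → ℝ) (hr : Measurable r) :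
    volume {p : ℝ × ℝ | p.1 = r p.2} = 0 := by
  have hG : MeasurableSet {p : ℝ × ℝ | p.1 = r p.2} :=
    measurableSet_eq_fun measurable_fst (hr.comp measurable_snd)
  rw [show (volume : Measure (ℝ × ℝ)) = (volume : Measure ℝ).prod volume from rfl,
    MeasureTheory.Measure.prod_apply_symm hG]
  have : ∀ y : ℝ, ((fun x => (x, y)) ⁻¹' {p : ℝ × ℝ | p.1 = r p.2}) = {r y} := by
    intro y; ext x; simp [Set.mem_setOf_eq]
  simp [this]

/-- The polar curve `{z | |z| = r (arg z)}` in `ℂ` is a null set. -/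
lemma complex_polar_curve_null (r : ℝ → ℝ) (hr : Measurable r) :
    volume {z : ℂ | ‖z‖ = r (Complex.arg z)} = 0 := by
  set T : Set ℂ := {z : ℂ | ‖z‖ = r (Complex.arg z)} with hT
  have hTm : MeasurableSet T :=
    measurableSet_eq_fun continuous_norm.measurable (hr.comp Complex.measurable_arg)
  have key : ∀ R : ℕ, volume (T ∩ Metric.ball (0 : ℂ) R) = 0 := by
    intro R
    set S : Set ℂ := T ∩ Metric.ball (0 : ℂ) R with hS
    have hSm : MeasurableSet S := hTm.inter Metric.isOpen_ball.measurableSet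
    have hSfin : volume S ≠ ⊤ :=
      ne_of_lt (lt_of_le_of_lt (measure_mono Set.inter_subset_right)
        measure_ball_lt_top)
    have hint := Complex.integral_comp_polarCoord_symm (S.indicator fun _ => (1 : ℝ))
    have hzero :
        (∫ p in polarCoord.target, p.1 • (S.indicator fun _ => (1 : ℝ))
          (Complex.polarCoord.symm p)) = 0 := by
      have hae : ∀ᵐ p ∂(volume.restrict polarCoord.target),
          p.1 • (S.indicator fun _ => (1 : ℝ)) (Complex.polarCoord.symm p) = 0 := by
        have h1 : ∀ᵐ p : ℝ × ℝ ∂volume, p ∉ {p : ℝ × ℝ | p.1 = r p.2} :=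
          (measure_eq_zero_iff_ae_notMem.mp (polarGraph_null r hr))
        filter_upwards [ae_restrict_of_ae h1,
          ae_restrict_mem polarCoord.open_target.measurableSet] with p hpG hpt
        have hnm : Complex.polarCoord.symm p ∉ S := by
          intro hmem
          apply hpG
          have hp1 : 0 < p.1 := hpt.1
          have hp2 : p.2 ∈ Set.Ioo (-Real.pi) Real.pi := hpt.2
          have habs : ‖Complex.polarCoord.symm p‖ = p.1 := by
            rw [Complex.norm_polarCoord_symm, abs_of_pos hp1]
          have harg : Complex.arg (Complex.polarCoord.symm p) = p.2 := by
            rw [Complex.polarCoord_symm_apply, Complex.arg_real_mul _ hp1,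
              Complex.ofReal_cos, Complex.ofReal_sin,
              Complex.arg_cos_add_sin_mul_I ⟨hp2.1, le_of_lt hp2.2⟩]
          have := hmem.1
          rw [hT, Set.mem_setOf_eq, habs, harg] at this
          exact this
        rw [Set.indicator_of_notMem hnm, smul_zero]
      exact integral_eq_zero_of_ae hae
    rw [hzero, MeasureTheory.integral_indicator_const (1 : ℝ) hSm, smul_eq_mul,
      mul_one] at hint
    exact (ENNReal.toReal_eq_zero_iff _).mp hint.symm |>.resolve_right hSfin
  have hcover : T ⊆ ⋃ R : ℕ, T ∩ Metric.ball (0 : ℂ) R := by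
    intro z hz
    obtain ⟨R, hR⟩ := exists_nat_gt (‖z‖)
    exact Set.mem_iUnion.mpr ⟨R, hz, by simpa [Complex.dist_eq] using hR⟩
  exact measure_mono_null hcover (measure_iUnion_null key)

/-- The star-shaped boundary curve is a null set in the plane. -/
lemma starCurve_null (r : ℝ → ℝ) (hr : Measurable r) (x₀ : EuclideanSpace ℝ (Fin 2)) :
    volume {x : EuclideanSpace ℝ (Fin 2) | ‖x - x₀‖ = r (polarAngle (x - x₀))} = 0 := by
  set φ : EuclideanSpace ℝ (Fin 2) → ℂ := fun x => ⟨x 0, x 1⟩ with hφ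
  have hφmp : MeasurePreserving φ volume volume := by
    have h1 := EuclideanSpace.volume_preserving_symm_measurableEquiv_toLp (Fin 2)
    have h2 := MeasureTheory.volume_preserving_finTwoArrow ℝ
    have h3 := Complex.volume_preserving_equiv_real_prod.symm
    have := (h3.comp h2).comp h1
    exact this
  have hψmp : MeasurePreserving (fun x : EuclideanSpace ℝ (Fin 2) => φ (x - x₀))
      volume volume := hφmp.comp (measurePreserving_sub_right volume x₀)
  have hTm : MeasurableSet {z : ℂ | ‖z‖ = r (Complex.arg z)} :=
    measurableSet_eq_fun continuous_norm.measurable (hr.comp Complex.measurable_arg)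
  have hset : {x : EuclideanSpace ℝ (Fin 2) | ‖x - x₀‖ = r (polarAngle (x - x₀))}
      = (fun x : EuclideanSpace ℝ (Fin 2) => φ (x - x₀)) ⁻¹'
        {z : ℂ | ‖z‖ = r (Complex.arg z)} := by
    ext x
    have habs : ‖φ (x - x₀)‖ = ‖x - x₀‖ := by
      rw [EuclideanSpace.norm_eq, Fin.sum_univ_two]
      simp [hφ, Complex.norm_def, Complex.normSq_mk, Real.norm_eq_abs, sq, abs_mul_abs_self]
    have harg : Complex.arg (φ (x - x₀)) = polarAngle (x - x₀) := rfl
    simp [Set.mem_setOf_eq, habs, harg]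
  rw [hset, hψmp.measure_preimage hTm.nullMeasurableSet]
  exact complex_polar_curve_null r hr

lemma polarAngle_measurable : Measurable polarAngle := by
  apply Complex.measurable_arg.comp
  have h0 : Measurable fun x : EuclideanSpace ℝ (Fin 2) => x 0 := (measurable_pi_apply 0).comp (WithLp.measurable_ofLp 2 _)
  have h1 : Measurable fun x : EuclideanSpace ℝ (Fin 2) => x 1 := (measurable_pi_apply 1).comp (WithLp.measurable_ofLp 2 _)
  exact Complex.measurableEquivRealProd.symm.measurable.comp (h0.prodMk h1)

theorem stmt0 (D : Set (EuclideanSpace ℝ (Fin 2))) (hDopen : IsOpen D)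
    (hDbdd : Bornology.IsBounded D)
    (x₀ : EuclideanSpace ℝ (Fin 2)) (hx₀ : x₀ ∈ D)
    (uplus uminus : ℝ) (huplus : 0 < uplus) (huminus : 0 < uminus)
    (r : ℝ → ℝ) (hr : Continuous r) (hrper : Function.Periodic r (2 * Real.pi))
    (rk : ℕ → ℝ → ℝ) (hrk : ∀ k, Continuous (rk k))
    (hrkper : ∀ k, Function.Periodic (rk k) (2 * Real.pi))
    (hconv : TendstoUniformly rk r atTop) :
    ∀ δ > (0 : ℝ),
      Tendsto
        (fun k => volume {x | x ∈ D ∧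
          δ < |starF D uplus uminus (rk k) x₀ x - starF D uplus uminus r x₀ x|})
        atTop (nhds 0) := by
  intro δ hδ
  set Sd : ℝ → Set (EuclideanSpace ℝ (Fin 2)) :=
    fun ε => {x | x ∈ D ∧ |‖x - x₀‖ - r (polarAngle (x - x₀))| ≤ ε} with hSd
  have hfm : Measurable fun x : EuclideanSpace ℝ (Fin 2) =>
      |‖x - x₀‖ - r (polarAngle (x - x₀))| := by
    apply Measurable.abs
    exact ((continuous_id.sub continuous_const).norm.measurable).sub
      (hr.measurable.comp (polarAngle_measurable.comp
        ((continuous_id.sub continuous_const).measurable)))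
  have hmeas : ∀ ε, MeasurableSet (Sd ε) := fun ε =>
    hDopen.measurableSet.inter (measurableSet_le hfm measurable_const)
  rw [ENNReal.tendsto_nhds_zero]
  intro η hη
  obtain ⟨R, hR⟩ := hDbdd.subset_closedBall 0
  have hfin : volume (Sd 1) ≠ ⊤ :=
    ne_of_lt (lt_of_le_of_lt
      (measure_mono fun x hx => hR hx.1) measure_closedBall_lt_top)
  have hanti : Antitone fun n : ℕ => Sd (1 / (n + 1)) := by
    intro m n hmn x hx
    refine ⟨hx.1, le_trans hx.2 ?_⟩
    apply one_div_le_one_div_of_le (by positivity)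
    have := (Nat.cast_le (α := ℝ)).mpr hmn; linarith
  have hiInter : (⋂ n : ℕ, Sd (1 / (n + 1)))
      ⊆ {x : EuclideanSpace ℝ (Fin 2) | ‖x - x₀‖ = r (polarAngle (x - x₀))} := by
    intro x hx
    by_contra hne
    have hpos : 0 < |‖x - x₀‖ - r (polarAngle (x - x₀))| :=
      abs_pos.mpr (sub_ne_zero.mpr hne)
    obtain ⟨n, hn⟩ := exists_nat_one_div_lt hpos
    exact absurd ((Set.mem_iInter.mp hx n).2) (not_le.mpr hn)
  have hlim := tendsto_measure_iInter_atTop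
    (fun n => (hmeas _).nullMeasurableSet) hanti ⟨0, by simpa using hfin⟩
  rw [measure_mono_null hiInter (starCurve_null r hr.measurable x₀)] at hlim
  obtain ⟨n, hn⟩ := (ENNReal.tendsto_nhds_zero.mp hlim η hη).exists
  have hε : (0 : ℝ) < 1 / (n + 1) := by positivity
  have hu := Metric.tendstoUniformly_iff.mp hconv _ hε
  filter_upwards [hu] with k hk
  refine le_trans (measure_mono ?_) hn
  rintro x ⟨hxD, hxδ⟩
  refine ⟨hxD, ?_⟩
  have hdist := hk (polarAngle (x - x₀))
  rw [Real.dist_eq] at hdist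
  have hdist' := abs_lt.mp hdist
  by_cases h1 : x ∈ starSet D (rk k) x₀ <;> by_cases h2 : x ∈ starSet D r x₀
  · exfalso
    simp only [starF, Set.indicator_of_mem h1, Set.indicator_of_mem h2] at hxδ
    simp at hxδ; linarith
  · have h1' := h1.2
    have h2' : ¬ ‖x - x₀‖ ≤ r (polarAngle (x - x₀)) := fun h => h2 ⟨hxD, h⟩
    push_neg at h2'
    rw [abs_le]; constructor <;> linarith
  · have h2' := h2.2
    have h1' : ¬ ‖x - x₀‖ ≤ rk k (polarAngle (x - x₀)) := fun h => h1 ⟨hxD, h⟩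
    push_neg at h1'
    rw [abs_le]; constructor <;> linarith
  · exfalso
    simp only [starF, Set.indicator_of_notMem h1, Set.indicator_of_notMem h2] at hxδ
    simp at hxδ; linarith
end

section
/- Let D ⊆ ℝ² be a bounded open set, let r : ℝ → ℝ be 2π-periodic and Lipschitz continuous, let x₀ ∈ D, and let (x₀^k)_{k≥1} ⊆ D be a sequence of points with |x₀^k − x₀| → 0 as k → ∞. Then the Lebesgue measure of the symmetric difference A(r, x₀^k) Δ A(r, x₀) tends to 0 as k → ∞. -/
open MeasureTheory Filter

theorem stmt5 (D : Set (EuclideanSpace ℝ (Fin 2))) (hDopen : IsOpen D)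
    (hDbdd : Bornology.IsBounded D)
    (r : ℝ → ℝ) (hrper : Function.Periodic r (2 * Real.pi))
    (K : NNReal) (hrlip : LipschitzWith K r)
    (x₀ : EuclideanSpace ℝ (Fin 2)) (hx₀ : x₀ ∈ D)
    (x₀k : ℕ → EuclideanSpace ℝ (Fin 2)) (hx₀k : ∀ k, x₀k k ∈ D)
    (hconv : Tendsto x₀k atTop (nhds x₀)) :
    Tendsto (fun k => volume (symmDiff (starSet D r (x₀k k)) (starSet D r x₀)))
      atTop (nhds 0) := by
  -- the model set
  set S : Set (EuclideanSpace ℝ (Fin 2)) := {y | ‖y‖ ≤ r (polarAngle y)} with hS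
  have hrcont : Continuous r := hrlip.continuous
  have hpa : Measurable (polarAngle : (EuclideanSpace ℝ (Fin 2)) → ℝ) := by
    apply Complex.measurable_arg.comp
    have hc : Continuous fun x : (EuclideanSpace ℝ (Fin 2)) => (⟨x 0, x 1⟩ : ℂ) := by
      have heq : (fun x : (EuclideanSpace ℝ (Fin 2)) => (⟨x 0, x 1⟩ : ℂ))
          = fun x : (EuclideanSpace ℝ (Fin 2)) => (x 0 : ℂ) + (x 1 : ℂ) * Complex.I := by
        funext x; simp [Complex.ext_iff]
      rw [heq]
      exact ((Complex.continuous_ofReal.comp (PiLp.continuous_apply 2 _ (0 : Fin 2)))).add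
        (((Complex.continuous_ofReal.comp (PiLp.continuous_apply 2 _ (1 : Fin 2)))).mul
          continuous_const)
    exact hc.measurable
  have hSm : MeasurableSet S := by
    have : Measurable fun y : (EuclideanSpace ℝ (Fin 2)) => r (polarAngle y) - ‖y‖ :=
      (hrcont.measurable.comp hpa).sub (measurable_norm)
    have h0 : S = (fun y : (EuclideanSpace ℝ (Fin 2)) => r (polarAngle y) - ‖y‖) ⁻¹' Set.Ici 0 := by
      ext y; simp [hS, sub_nonneg]
    rw [h0]
    exact this measurableSet_Ici
  -- S is contained in a ball, hence has finite measure
  have hSbdd : S ⊆ Metric.closedBall 0 (r 0 + K * Real.pi) := by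
    intro y hy
    have harg : |polarAngle y| ≤ Real.pi := Complex.abs_arg_le_pi _
    have hl : |r (polarAngle y) - r 0| ≤ K * |polarAngle y| := by
      have := hrlip.dist_le_mul (polarAngle y) 0
      simpa [Real.dist_eq] using this
    have : r (polarAngle y) ≤ r 0 + K * Real.pi := by
      have h1 : r (polarAngle y) - r 0 ≤ K * |polarAngle y| :=
        (le_abs_self _).trans hl
      have h2 : (K : ℝ) * |polarAngle y| ≤ K * Real.pi :=
        mul_le_mul_of_nonneg_left harg K.coe_nonneg
      linarith
    simpa [Metric.mem_closedBall, dist_eq_norm] using le_trans hy this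
  have hSfin : volume S ≠ ⊤ :=
    ((measure_mono hSbdd).trans_lt (MeasureTheory.measure_closedBall_lt_top)).ne
  -- starSet as intersection with a translate
  have hstar : ∀ c : (EuclideanSpace ℝ (Fin 2)), starSet D r c = D ∩ ((· - c) ⁻¹' S) := by
    intro c; ext x; simp [starSet, hS, Set.mem_setOf_eq]
  -- continuous maps
  set f : ℕ → C((EuclideanSpace ℝ (Fin 2)), (EuclideanSpace ℝ (Fin 2))) := fun k => ⟨fun x => x - x₀k k, by continuity⟩ with hf
  set g : C((EuclideanSpace ℝ (Fin 2)), (EuclideanSpace ℝ (Fin 2))) := ⟨fun x => x - x₀, by continuity⟩ with hg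
  have hfg : Tendsto f atTop (nhds g) := by
    apply ContinuousMap.tendsto_of_tendstoLocallyUniformly
    apply TendstoUniformly.tendstoLocallyUniformly
    rw [Metric.tendstoUniformly_iff]
    intro ε hε
    filter_upwards [Metric.tendsto_nhds.mp hconv ε hε] with k hk x
    show dist (g x) (f k x) < ε
    have : dist (g x) (f k x) = dist x₀ (x₀k k) := dist_sub_left x x₀ (x₀k k)
    rw [this, dist_comm]
    exact hk
  have hmain : Tendsto (fun k => volume (symmDiff (f k ⁻¹' S) (g ⁻¹' S))) atTop (nhds 0) := by
    refine MeasureTheory.tendsto_measure_symmDiff_preimage_nhds_zero hfg ?_ ?_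
      hSm.nullMeasurableSet hSfin
    · exact Eventually.of_forall fun k => measurePreserving_sub_right volume (x₀k k)
    · exact measurePreserving_sub_right volume x₀
  refine tendsto_of_tendsto_of_tendsto_of_le_of_le tendsto_const_nhds hmain
    (fun k => zero_le) (fun k => measure_mono ?_)
  rw [hstar (x₀k k), hstar x₀]
  intro x hx
  rcases hx with h | h
  · exact Or.inl ⟨h.1.2, fun hc => h.2 ⟨h.1.1, hc⟩⟩
  · exact Or.inr ⟨h.1.2, fun hc => h.2 ⟨h.1.1, hc⟩⟩
end

section
/- Let D ⊆ ℝ^d be a bounded open set. Let u : cl(D) → ℝ be continuous and suppose that for each i = 1, …, n−1 the level set {x ∈ D : u(x) = c_i} has Lebesgue measure zero. Let (u_k)_{k≥1} be a sequence of continuous functions on cl(D) with ‖u_k − u‖_∞ → 0 as k → ∞. Then F₃(u_k) converges to F₃(u) in Lebesgue measure on D, i.e. for every δ > 0 the Lebesgue measure of {x ∈ D : |F₃(u_k)(x) − F₃(u)(x)| > δ} tends to 0 as k → ∞. -/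
open MeasureTheory Filter

/-- The region `D_i(u) = {x ∈ D : c_{i-1} ≤ u(x) < c_i}`, where the thresholds are
extended reals with `c 0 = -∞` and `c n = ∞`. -/
def levelRegion {d : ℕ} (D : Set (EuclideanSpace ℝ (Fin d))) {n : ℕ}
    (c : Fin (n + 1) → EReal) (u : EuclideanSpace ℝ (Fin d) → ℝ) (i : Fin n) :
    Set (EuclideanSpace ℝ (Fin d)) :=
  {x | x ∈ D ∧ c i.castSucc ≤ (u x : EReal) ∧ (u x : EReal) < c i.succ}

/-- The level set conductivity map `F₃(u) = ∑_{i=1}^n f_i · 𝟙_{D_i(u)}`. -/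
noncomputable def levelF {d : ℕ} (D : Set (EuclideanSpace ℝ (Fin d))) {n : ℕ}
    (c : Fin (n + 1) → EReal) (f : Fin n → EuclideanSpace ℝ (Fin d) → ℝ)
    (u : EuclideanSpace ℝ (Fin d) → ℝ) (x : EuclideanSpace ℝ (Fin d)) : ℝ :=
  ∑ i : Fin n, (levelRegion D c u i).indicator (f i) x

theorem stmt7 {d : ℕ} (D : Set (EuclideanSpace ℝ (Fin d))) (hDopen : IsOpen D)
    (hDbdd : Bornology.IsBounded D)
    (n : ℕ) (hn : 1 ≤ n) (c : Fin (n + 1) → EReal)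
    (hc0 : c 0 = ⊥) (hcn : c (Fin.last n) = ⊤) (hcmono : StrictMono c)
    (f : Fin n → EuclideanSpace ℝ (Fin d) → ℝ)
    (hfcont : ∀ i, ContinuousOn (f i) (closure D))
    (hfpos : ∀ i, ∀ x ∈ closure D, 0 < f i x)
    (u : EuclideanSpace ℝ (Fin d) → ℝ) (hu : ContinuousOn u (closure D))
    (hlevel : ∀ i : Fin (n + 1), i ≠ 0 → i ≠ Fin.last n →
      volume {x | x ∈ D ∧ (u x : EReal) = c i} = 0)
    (uk : ℕ → EuclideanSpace ℝ (Fin d) → ℝ)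
    (huk : ∀ k, ContinuousOn (uk k) (closure D))
    (hconv : TendstoUniformlyOn uk u atTop (closure D)) :
    ∀ δ > (0 : ℝ),
      Tendsto (fun k => volume {x | x ∈ D ∧ δ < |levelF D c f (uk k) x - levelF D c f u x|})
        atTop (nhds 0) := by
  classical
  intro δ hδ
  set r : Fin (n + 1) → ℝ := fun j => (c j).toReal with hrdef
  -- interior thresholds are real
  have hreal : ∀ j : Fin (n + 1), j ≠ 0 → j ≠ Fin.last n → c j = ((r j : ℝ) : EReal) := by
    intro j hj0 hjl
    have h1 : (⊥ : EReal) < c j := by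
      rw [← hc0]; exact hcmono (Fin.pos_of_ne_zero hj0)
    have h2 : c j < ⊤ := by
      rw [← hcn]; exact hcmono (Fin.lt_last_iff_ne_last.2 hjl)
    exact (EReal.coe_toReal h2.ne h1.ne').symm
  -- the bad tubes
  set T : ℕ → Set (EuclideanSpace ℝ (Fin d)) := fun m =>
    {x | x ∈ D ∧ ∃ j : Fin (n + 1), j ≠ 0 ∧ j ≠ Fin.last n ∧
      |u x - r j| ≤ 1 / ((m : ℝ) + 1)} with hTdef
  have hDmeas : MeasurableSet D := hDopen.measurableSet
  have huD : ContinuousOn u D := hu.mono subset_closure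
  -- measurability of T m
  have hTmeas : ∀ m, MeasurableSet (T m) := by
    intro m
    have : T m = ⋃ j : Fin (n + 1),
        (if j ≠ 0 ∧ j ≠ Fin.last n then
          (D \ (D ∩ (fun x => |u x - r j|) ⁻¹' Set.Ioi (1 / ((m : ℝ) + 1)))) else ∅) := by
      ext x
      simp only [hTdef, Set.mem_setOf_eq, Set.mem_iUnion]
      constructor
      · rintro ⟨hxD, j, hj0, hjl, hle⟩
        refine ⟨j, ?_⟩
        rw [if_pos ⟨hj0, hjl⟩]
        exact ⟨hxD, fun h => absurd h.2 (by simpa using hle)⟩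
      · rintro ⟨j, hj⟩
        by_cases hc : j ≠ 0 ∧ j ≠ Fin.last n
        · rw [if_pos hc] at hj
          rcases hj with ⟨hxD, hnot⟩
          refine ⟨hxD, j, hc.1, hc.2, ?_⟩
          by_contra h
          exact hnot ⟨hxD, by simpa using h⟩
        · rw [if_neg hc] at hj; exact absurd hj (Set.notMem_empty x)
    rw [this]
    refine MeasurableSet.iUnion fun j => ?_
    split_ifs with h
    · refine hDmeas.diff ?_
      have hopen : IsOpen (D ∩ (fun x => |u x - r j|) ⁻¹' Set.Ioi (1 / ((m : ℝ) + 1))) := by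
        refine ContinuousOn.isOpen_inter_preimage ?_ hDopen isOpen_Ioi
        exact (huD.sub continuousOn_const).abs
      exact hopen.measurableSet
    · exact MeasurableSet.empty
  -- antitone
  have hTanti : Antitone T := by
    intro m₁ m₂ hm x hx
    rcases hx with ⟨hxD, j, hj0, hjl, hle⟩
    refine ⟨hxD, j, hj0, hjl, hle.trans ?_⟩
    apply one_div_le_one_div_of_le
    · positivity
    · exact add_le_add (by exact_mod_cast hm) le_rfl
  -- intersection has measure zero
  have hInter : volume (⋂ m, T m) = 0 := by
    have hsub : (⋂ m, T m) ⊆ ⋃ j : Fin (n + 1),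
        {x | (j ≠ 0 ∧ j ≠ Fin.last n) ∧ x ∈ D ∧ (u x : EReal) = c j} := by
      intro x hx
      simp only [Set.mem_iInter] at hx
      have hxD : x ∈ D := (hx 0).1
      by_contra hcon
      simp only [Set.mem_iUnion, Set.mem_setOf_eq, not_exists] at hcon
      have hne : ∀ j : Fin (n + 1), j ≠ 0 → j ≠ Fin.last n → u x ≠ r j := by
        intro j hj0 hjl heq
        exact hcon j ⟨⟨hj0, hjl⟩, hxD, by rw [hreal j hj0 hjl, heq]⟩
      set ε : ℝ := (Finset.univ : Finset (Fin (n + 1))).inf' Finset.univ_nonempty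
        (fun j => if j ≠ 0 ∧ j ≠ Fin.last n then |u x - r j| else 1) with hεdef
      have hεpos : 0 < ε := by
        rw [hεdef, Finset.lt_inf'_iff]
        intro j _
        split_ifs with h
        · rw [abs_pos, sub_ne_zero]; exact hne j h.1 h.2
        · exact one_pos
      obtain ⟨m, hm⟩ := exists_nat_one_div_lt hεpos
      rcases (hx m).2 with ⟨j, hj0, hjl, hle⟩
      have hle2 : ε ≤ |u x - r j| := by
        rw [hεdef]
        calc (Finset.univ : Finset (Fin (n + 1))).inf' Finset.univ_nonempty
              (fun j => if j ≠ 0 ∧ j ≠ Fin.last n then |u x - r j| else 1)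
            ≤ (if j ≠ 0 ∧ j ≠ Fin.last n then |u x - r j| else 1) :=
              Finset.inf'_le _ (Finset.mem_univ j)
          _ = |u x - r j| := if_pos ⟨hj0, hjl⟩
      linarith
    refine measure_mono_null hsub (measure_iUnion_null fun j => ?_)
    by_cases h : j ≠ 0 ∧ j ≠ Fin.last n
    · refine measure_mono_null (fun x hx => ?_) (hlevel j h.1 h.2)
      exact ⟨hx.2.1, hx.2.2⟩
    · have : {x | (j ≠ 0 ∧ j ≠ Fin.last n) ∧ x ∈ D ∧ (u x : EReal) = c j} = ∅ := by
        ext x; simp only [Set.mem_setOf_eq, Set.mem_empty_iff_false, iff_false]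
        rintro ⟨hj, -⟩; exact h hj
      rw [this]; exact measure_empty
  -- finiteness
  have hfin : volume (T 0) ≠ ⊤ := by
    have : volume (T 0) ≤ volume D := measure_mono fun x hx => hx.1
    exact (this.trans_lt hDbdd.measure_lt_top).ne
  -- continuity from above
  have hT0 : Tendsto (fun m => volume (T m)) atTop (nhds 0) := by
    have h := tendsto_measure_iInter_atTop (μ := volume)
      (fun m => (hTmeas m).nullMeasurableSet) hTanti ⟨0, hfin⟩
    rw [hInter] at h
    exact h
  -- conclusion
  rw [ENNReal.tendsto_atTop_zero]
  intro ε hε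
  obtain ⟨M, hM⟩ := (ENNReal.tendsto_atTop_zero.mp hT0) ε hε
  have hvol : volume (T M) ≤ ε := hM M le_rfl
  have hb : (0 : ℝ) < 1 / ((M : ℝ) + 1) := by positivity
  obtain ⟨K, hK⟩ := eventually_atTop.mp
    ((Metric.tendstoUniformlyOn_iff.mp hconv) (1 / ((M : ℝ) + 1)) hb)
  refine ⟨K, fun k hk => le_trans (measure_mono ?_) hvol⟩
  intro x hx
  rcases hx with ⟨hxD, hxδ⟩
  by_contra hxT
  -- x is far from all interior thresholds
  have hfar : ∀ j : Fin (n + 1), j ≠ 0 → j ≠ Fin.last n →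
      1 / ((M : ℝ) + 1) < |u x - r j| := by
    intro j hj0 hjl
    by_contra h
    exact hxT ⟨hxD, j, hj0, hjl, not_lt.mp h⟩
  have hdist : |u x - uk k x| < 1 / ((M : ℝ) + 1) := by
    have := hK k hk x (subset_closure hxD)
    rwa [Real.dist_eq] at this
  -- the level regions agree at x
  have key : ∀ j : Fin (n + 1), (c j ≤ (uk k x : EReal) ↔ c j ≤ (u x : EReal)) := by
    intro j
    by_cases hj0 : j = 0
    · simp [hj0, hc0]
    by_cases hjl : j = Fin.last n
    · subst hjl
      rw [hcn]
      simp only [top_le_iff]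
      constructor <;> intro h <;> exact absurd h (by simp [EReal.coe_ne_top])
    · rw [hreal j hj0 hjl, EReal.coe_le_coe_iff, EReal.coe_le_coe_iff]
      have h1 := hfar j hj0 hjl
      rcases le_or_gt (r j) (u x) with hle | hlt
      · have : u x - r j > 1 / ((M : ℝ) + 1) := by
          rw [abs_of_nonneg (by linarith)] at h1; exact h1
        have h2 := abs_lt.mp hdist
        constructor <;> intro _ <;> [exact hle; linarith]
      · have : r j - u x > 1 / ((M : ℝ) + 1) := by
          rw [abs_of_nonpos (by linarith), neg_sub] at h1; exact h1
        have h2 := abs_lt.mp hdist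
        constructor <;> intro h <;> [linarith; linarith]
  have hmem : ∀ i : Fin n, x ∈ levelRegion D c (uk k) i ↔ x ∈ levelRegion D c u i := by
    intro i
    simp only [levelRegion, Set.mem_setOf_eq]
    rw [← not_le, ← not_le, key i.castSucc, key i.succ]
  have heq : levelF D c f (uk k) x = levelF D c f u x := by
    unfold levelF
    refine Finset.sum_congr rfl fun i _ => ?_
    by_cases h : x ∈ levelRegion D c u i
    · rw [Set.indicator_of_mem h, Set.indicator_of_mem ((hmem i).mpr h)]
    · rw [Set.indicator_of_notMem h,
        Set.indicator_of_notMem (fun h' => h ((hmem i).mp h'))]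
  rw [heq, sub_self, abs_zero] at hxδ
  linarith
end

section
/- Let D ⊆ ℝ^d be a bounded open set. Let u : cl(D) → ℝ be continuous and suppose that for each i = 1, …, n−1 the level set {x ∈ D : u(x) = c_i} has Lebesgue measure zero. Let (u_k)_{k≥1} be a sequence of continuous functions on cl(D) with ‖u_k − u‖_∞ → 0 as k → ∞. Then for every p with 1 ≤ p < ∞, the integral ∫_D |F₃(u_k)(x) − F₃(u)(x)|^p dx tends to 0 as k → ∞; that is, F₃(u_k) → F₃(u) in L^p(D). -/
open MeasureTheory Filter

lemma measurableSet_levelRegion {d : ℕ} {D : Set (EuclideanSpace ℝ (Fin d))}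
    (hDopen : IsOpen D) {n : ℕ} (c : Fin (n + 1) → EReal)
    {v : EuclideanSpace ℝ (Fin d) → ℝ} (hv : ContinuousOn v D) (i : Fin n) :
    MeasurableSet (levelRegion D c v i) := by
  have hco : ContinuousOn (fun x => (v x : EReal)) D :=
    continuous_coe_real_ereal.comp_continuousOn hv
  have h1 : IsOpen (D ∩ (fun x => (v x : EReal)) ⁻¹' Set.Iio (c i.succ)) :=
    hco.isOpen_inter_preimage hDopen isOpen_Iio
  have h2 : IsOpen (D ∩ (fun x => (v x : EReal)) ⁻¹' Set.Iio (c i.castSucc)) :=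
    hco.isOpen_inter_preimage hDopen isOpen_Iio
  have heq : levelRegion D c v i =
      (D ∩ (fun x => (v x : EReal)) ⁻¹' Set.Iio (c i.succ)) \
      (D ∩ (fun x => (v x : EReal)) ⁻¹' Set.Iio (c i.castSucc)) := by
    ext x
    simp only [levelRegion, Set.mem_setOf_eq, Set.mem_diff, Set.mem_inter_iff,
      Set.mem_preimage, Set.mem_Iio, not_and, not_lt]
    tauto
  rw [heq]
  exact h1.measurableSet.diff h2.measurableSet

lemma aemeasurable_levelF {d : ℕ} {D : Set (EuclideanSpace ℝ (Fin d))}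
    (hDopen : IsOpen D) {n : ℕ} (c : Fin (n + 1) → EReal)
    {f : Fin n → EuclideanSpace ℝ (Fin d) → ℝ}
    (hfcont : ∀ i, ContinuousOn (f i) (closure D))
    {v : EuclideanSpace ℝ (Fin d) → ℝ} (hv : ContinuousOn v (closure D)) :
    AEMeasurable (levelF D c f v) (volume.restrict D) := by
  apply Finset.aemeasurable_fun_sum
  intro i _
  exact ((((hfcont i).mono subset_closure).aemeasurable hDopen.measurableSet).indicator
    (measurableSet_levelRegion hDopen c (hv.mono subset_closure) i))

theorem stmt8 {d : ℕ} (D : Set (EuclideanSpace ℝ (Fin d))) (hDopen : IsOpen D)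
    (hDbdd : Bornology.IsBounded D)
    (n : ℕ) (hn : 1 ≤ n) (c : Fin (n + 1) → EReal)
    (hc0 : c 0 = ⊥) (hcn : c (Fin.last n) = ⊤) (hcmono : StrictMono c)
    (f : Fin n → EuclideanSpace ℝ (Fin d) → ℝ)
    (hfcont : ∀ i, ContinuousOn (f i) (closure D))
    (hfpos : ∀ i, ∀ x ∈ closure D, 0 < f i x)
    (u : EuclideanSpace ℝ (Fin d) → ℝ) (hu : ContinuousOn u (closure D))
    (hlevel : ∀ i : Fin (n + 1), i ≠ 0 → i ≠ Fin.last n →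
      volume {x | x ∈ D ∧ (u x : EReal) = c i} = 0)
    (uk : ℕ → EuclideanSpace ℝ (Fin d) → ℝ)
    (huk : ∀ k, ContinuousOn (uk k) (closure D))
    (hconv : TendstoUniformlyOn uk u atTop (closure D)) :
    ∀ p : ℝ, 1 ≤ p →
      Tendsto (fun k => ∫ x in D, |levelF D c f (uk k) x - levelF D c f u x| ^ p)
        atTop (nhds 0) := by
  intro p hp
  have hp0 : (0:ℝ) ≤ p := le_trans zero_le_one hp
  have hpne : p ≠ 0 := by positivity
  -- bound on f
  have hcomp : IsCompact (closure D) := hDbdd.isCompact_closure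
  choose C hC using fun i => hcomp.exists_bound_of_continuousOn (hfcont i)
  set M : ℝ := ∑ i : Fin n, max (C i) 0 with hM
  have hM0 : 0 ≤ M := Finset.sum_nonneg fun i _ => le_max_right _ _
  have hbnd : ∀ (v : EuclideanSpace ℝ (Fin d) → ℝ) (x : EuclideanSpace ℝ (Fin d)),
      |levelF D c f v x| ≤ M := by
    intro v x
    refine (Finset.abs_sum_le_sum_abs _ _).trans (Finset.sum_le_sum fun i _ => ?_)
    by_cases hx : x ∈ levelRegion D c v i
    · rw [Set.indicator_of_mem hx]
      simpa [Real.norm_eq_abs] using (hC i x (subset_closure hx.1)).trans (le_max_left (C i) 0)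
    · rw [Set.indicator_of_notMem hx]
      simp [le_max_right]
  -- measurability of integrands
  have hmeas : ∀ k, AEStronglyMeasurable
      (fun x => |levelF D c f (uk k) x - levelF D c f u x| ^ p) (volume.restrict D) := by
    intro k
    have h1 := aemeasurable_levelF hDopen c hfcont (huk k)
    have h2 := aemeasurable_levelF hDopen c hfcont hu
    exact (((Real.continuous_rpow_const hp0).comp continuous_abs).measurable.comp_aemeasurable
      (h1.sub h2)).aestronglyMeasurable
  -- finite measure
  have hDfin : volume D < ⊤ :=
    lt_of_le_of_lt (measure_mono subset_closure) hcomp.measure_lt_top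
  -- bound integrable
  have hbound_int : Integrable (fun _ => (2 * M) ^ p) (volume.restrict D) :=
    integrableOn_const hDfin.ne
  -- a.e. bound
  have h_bound : ∀ k, ∀ᵐ x ∂volume.restrict D,
      ‖|levelF D c f (uk k) x - levelF D c f u x| ^ p‖ ≤ (2 * M) ^ p := by
    intro k
    filter_upwards with x
    rw [Real.norm_eq_abs, abs_of_nonneg (Real.rpow_nonneg (abs_nonneg _) p)]
    apply Real.rpow_le_rpow (abs_nonneg _) _ hp0
    calc |levelF D c f (uk k) x - levelF D c f u x|
        ≤ |levelF D c f (uk k) x| + |levelF D c f u x| := abs_sub _ _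
      _ ≤ M + M := add_le_add (hbnd _ _) (hbnd _ _)
      _ = 2 * M := by ring
  -- a.e. pointwise convergence
  have hae_ne : ∀ᵐ x ∂volume.restrict D, ∀ i : Fin (n+1), i ≠ 0 → i ≠ Fin.last n →
      ¬(x ∈ D ∧ (u x : EReal) = c i) := by
    rw [ae_all_iff]
    intro i
    by_cases h0 : i = 0
    · filter_upwards with x; intro h; exact absurd h0 h
    by_cases hlast : i = Fin.last n
    · filter_upwards with x; intro _ h; exact absurd hlast h
    · have := hlevel i h0 hlast
      have : ∀ᵐ x ∂volume, ¬(x ∈ D ∧ (u x : EReal) = c i) := by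
        rw [ae_iff]; simpa using this
      filter_upwards [ae_restrict_of_ae this] with x hx _ _ using hx
  have hlim : ∀ᵐ x ∂volume.restrict D,
      Tendsto (fun k => |levelF D c f (uk k) x - levelF D c f u x| ^ p) atTop (nhds 0) := by
    filter_upwards [hae_ne, ae_restrict_mem hDopen.measurableSet] with x hne hxD
    have hne' : ∀ j : Fin (n+1), j ≠ 0 → j ≠ Fin.last n → (u x : EReal) ≠ c j :=
      fun j h0 hl h => hne j h0 hl ⟨hxD, h⟩
    have hxt : Tendsto (fun k => ((uk k x : ℝ) : EReal)) atTop (nhds ((u x : ℝ) : EReal)) :=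
      (continuous_coe_real_ereal.tendsto _).comp (hconv.tendsto_at (subset_closure hxD))
    have hkey : ∀ i : Fin n, ∀ᶠ k in atTop,
        (levelRegion D c (uk k) i).indicator (f i) x =
        (levelRegion D c u i).indicator (f i) x := by
      intro i
      by_cases hmem : x ∈ levelRegion D c u i
      · obtain ⟨-, h1, h2⟩ := hmem
        have h1' : c i.castSucc < (u x : EReal) := by
          rcases eq_or_ne i.castSucc 0 with h0 | h0
          · rw [h0, hc0]; exact bot_lt_iff_ne_bot.2 (EReal.coe_ne_bot _)
          · exact lt_of_le_of_ne h1
              (Ne.symm (hne' i.castSucc h0 (ne_of_lt (Fin.castSucc_lt_last i))))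
        have hIoo : ∀ᶠ k in atTop, ((uk k x : ℝ) : EReal) ∈ Set.Ioo (c i.castSucc) (c i.succ) :=
          hxt (isOpen_Ioo.mem_nhds ⟨h1', h2⟩)
        filter_upwards [hIoo] with k hk
        rw [Set.indicator_of_mem
            (show x ∈ levelRegion D c (uk k) i from ⟨hxD, le_of_lt hk.1, hk.2⟩),
          Set.indicator_of_mem (show x ∈ levelRegion D c u i from ⟨hxD, h1, h2⟩)]
      · have hnot : ¬(c i.castSucc ≤ (u x : EReal) ∧ (u x : EReal) < c i.succ) := by
          intro h; exact hmem ⟨hxD, h.1, h.2⟩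
        rw [not_and_or, not_le, not_lt] at hnot
        rcases hnot with hlt | hge
        · have : ∀ᶠ k in atTop, ((uk k x : ℝ) : EReal) ∈ Set.Iio (c i.castSucc) :=
            hxt (isOpen_Iio.mem_nhds hlt)
          filter_upwards [this] with k hk
          rw [Set.indicator_of_notMem (fun h => absurd h.2.1 (not_le.2 hk)),
            Set.indicator_of_notMem hmem]
        · have hsne : i.succ ≠ Fin.last n := by
            intro h
            rw [h, hcn] at hge
            exact EReal.coe_ne_top _ (top_le_iff.1 hge)
          have h2' : c i.succ < (u x : EReal) :=
            lt_of_le_of_ne hge (hne' i.succ (Fin.succ_ne_zero i) hsne).symm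
          have : ∀ᶠ k in atTop, ((uk k x : ℝ) : EReal) ∈ Set.Ioi (c i.succ) :=
            hxt (isOpen_Ioi.mem_nhds h2')
          filter_upwards [this] with k hk
          rw [Set.indicator_of_notMem (fun h => absurd h.2.2 (not_lt.2 (le_of_lt hk))),
            Set.indicator_of_notMem hmem]
    have hall : ∀ᶠ k in atTop, |levelF D c f (uk k) x - levelF D c f u x| ^ p = 0 := by
      filter_upwards [eventually_all.2 hkey] with k hk
      have : levelF D c f (uk k) x = levelF D c f u x :=
        Finset.sum_congr rfl fun i _ => hk i
      rw [this, sub_self, abs_zero, Real.zero_rpow hpne]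
    exact Tendsto.congr' (hall.mono fun k hk => hk.symm) tendsto_const_nhds
  have := tendsto_integral_of_dominated_convergence (μ := volume.restrict D)
    (F := fun k x => |levelF D c f (uk k) x - levelF D c f u x| ^ p)
    (f := fun _ => (0:ℝ)) (fun _ => (2 * M) ^ p) hmeas hbound_int h_bound hlim
  simpa using this
end

section
/- Let (X, 𝓕, μ₀) be a probability space, let m ∈ ℕ, and let G : X → ℝ^m be a measurable map for which there exists M ≥ 0 with ‖G(u)‖ ≤ M for all u ∈ X, where ‖·‖ is the Euclidean norm on ℝ^m. For y ∈ ℝ^m define Φ(u; y) = (1/2)‖G(u) − y‖² and Z(y) = ∫_X exp(−Φ(u; y)) μ₀(du). Then Z(y) > 0 for every y ∈ ℝ^m, and for every ρ > 0 there exists a constant C = C(ρ, M) > 0 such that for all y, y' ∈ ℝ^m with ‖y‖ ≤ ρ and ‖y'‖ ≤ ρ, ( (1/2) ∫_X ( sqrt( exp(−Φ(u; y)) / Z(y) ) − sqrt( exp(−Φ(u; y')) / Z(y') ) )² μ₀(du) )^{1/2} ≤ C ‖y − y'‖. -/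
open MeasureTheory

/-- The least-squares potential `Φ(u; y) = (1/2)‖G(u) − y‖²`. -/
noncomputable def lsPotential {X : Type*} {m : ℕ} (G : X → EuclideanSpace ℝ (Fin m))
    (u : X) (y : EuclideanSpace ℝ (Fin m)) : ℝ :=
  (1 / 2 : ℝ) * ‖G u - y‖ ^ 2

/-- The normalization constant `Z(y) = ∫_X exp(−Φ(u; y)) μ₀(du)`. -/
noncomputable def normConst {X : Type*} [MeasurableSpace X] (μ₀ : Measure X) {m : ℕ}
    (G : X → EuclideanSpace ℝ (Fin m)) (y : EuclideanSpace ℝ (Fin m)) : ℝ :=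
  ∫ u, Real.exp (-lsPotential G u y) ∂μ₀

lemma aux_exp_lip {a b : ℝ} (ha : 0 ≤ a) (hb : 0 ≤ b) :
    |Real.exp (-a) - Real.exp (-b)| ≤ |a - b| := by
  wlog h : a ≤ b generalizing a b
  · rw [abs_sub_comm, abs_sub_comm a b]; exact this hb ha (le_of_not_ge h)
  rw [abs_of_nonneg (by simpa using Real.exp_le_exp.2 (neg_le_neg h)),
    abs_of_nonpos (by linarith)]
  have hprod : Real.exp (-a) * Real.exp (-(b-a)) = Real.exp (-b) := by
    rw [← Real.exp_add]; ring_nf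
  nlinarith [Real.add_one_le_exp (-(b-a)), Real.exp_pos (-a),
    Real.exp_le_one_iff.2 (neg_nonpos.2 ha), hprod]

lemma aux_sqrt_lip {c s t : ℝ} (hc : 0 < c) (hs : c ≤ s) (ht : c ≤ t) :
    |Real.sqrt s - Real.sqrt t| ≤ |s - t| / (2 * Real.sqrt c) := by
  have hcs : Real.sqrt c ≤ Real.sqrt s := Real.sqrt_le_sqrt hs
  have hct : Real.sqrt c ≤ Real.sqrt t := Real.sqrt_le_sqrt ht
  have hc' : 0 < Real.sqrt c := Real.sqrt_pos.2 hc
  have key : |Real.sqrt s - Real.sqrt t| * (2 * Real.sqrt c) ≤ |s - t| := by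
    have h1 : (Real.sqrt s - Real.sqrt t) * (Real.sqrt s + Real.sqrt t) = s - t := by
      have := Real.sq_sqrt (hc.le.trans hs)
      have := Real.sq_sqrt (hc.le.trans ht)
      nlinarith
    calc |Real.sqrt s - Real.sqrt t| * (2 * Real.sqrt c)
        ≤ |Real.sqrt s - Real.sqrt t| * (Real.sqrt s + Real.sqrt t) := by
          apply mul_le_mul_of_nonneg_left (by linarith) (abs_nonneg _)
      _ = |s - t| := by
          rw [← abs_of_nonneg (by linarith : (0:ℝ) ≤ Real.sqrt s + Real.sqrt t), ← abs_mul, h1]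
  rw [le_div_iff₀ (by positivity)]
  exact key

lemma pot_nonneg {X : Type*} {m : ℕ} {G : X → EuclideanSpace ℝ (Fin m)}
    (u : X) (y : EuclideanSpace ℝ (Fin m)) : 0 ≤ lsPotential G u y := by
  unfold lsPotential; positivity

lemma pot_le {X : Type*} {m : ℕ} {G : X → EuclideanSpace ℝ (Fin m)}
    {M ρ : ℝ} (hGbdd : ∀ u, ‖G u‖ ≤ M) (u : X) {y : EuclideanSpace ℝ (Fin m)}
    (hy : ‖y‖ ≤ ρ) : lsPotential G u y ≤ (M + ρ) ^ 2 / 2 := by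
  have h : ‖G u - y‖ ≤ M + ρ := (norm_sub_le _ _).trans (add_le_add (hGbdd u) hy)
  have h0 : (0:ℝ) ≤ ‖G u - y‖ := norm_nonneg _
  unfold lsPotential; nlinarith

lemma pot_diff_le {X : Type*} {m : ℕ} {G : X → EuclideanSpace ℝ (Fin m)}
    {M ρ : ℝ} (hGbdd : ∀ u, ‖G u‖ ≤ M) (u : X)
    {y y' : EuclideanSpace ℝ (Fin m)} (hy : ‖y‖ ≤ ρ) (hy' : ‖y'‖ ≤ ρ) :
    |lsPotential G u y - lsPotential G u y'| ≤ (M + ρ) * ‖y - y'‖ := by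
  set a := ‖G u - y‖ with ha
  set b := ‖G u - y'‖ with hb
  have h1 : a ≤ M + ρ := (norm_sub_le _ _).trans (add_le_add (hGbdd u) hy)
  have h2 : b ≤ M + ρ := (norm_sub_le _ _).trans (add_le_add (hGbdd u) hy')
  have h3 : |a - b| ≤ ‖y - y'‖ := by
    have := abs_norm_sub_norm_le (G u - y) (G u - y')
    have he : (G u - y) - (G u - y') = y' - y := by abel
    rw [he, norm_sub_rev y' y] at this
    exact this
  have h0a : (0:ℝ) ≤ a := norm_nonneg _
  have h0b : (0:ℝ) ≤ b := norm_nonneg _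
  obtain ⟨h3l, h3r⟩ := abs_le.1 h3
  have hD : (0:ℝ) ≤ ‖y - y'‖ := norm_nonneg _
  unfold lsPotential
  rw [← ha, ← hb, abs_le]
  constructor <;> nlinarith

lemma exp_pot_meas {X : Type*} [MeasurableSpace X] {m : ℕ} {G : X → EuclideanSpace ℝ (Fin m)}
    (hGmeas : Measurable G) (y : EuclideanSpace ℝ (Fin m)) :
    Measurable fun u => Real.exp (-lsPotential G u y) := by
  have h1 : Continuous fun v : EuclideanSpace ℝ (Fin m) =>
      Real.exp (-((1/2 : ℝ) * ‖v - y‖ ^ 2)) := by fun_prop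
  exact h1.measurable.comp hGmeas

lemma exp_pot_integrable {X : Type*} [MeasurableSpace X] (μ₀ : Measure X)
    [IsProbabilityMeasure μ₀] {m : ℕ} {G : X → EuclideanSpace ℝ (Fin m)}
    (hGmeas : Measurable G) (y : EuclideanSpace ℝ (Fin m)) :
    Integrable (fun u => Real.exp (-lsPotential G u y)) μ₀ := by
  refine Integrable.mono' (integrable_const 1) ((exp_pot_meas hGmeas y).aestronglyMeasurable)
    (Filter.Eventually.of_forall fun u => ?_)
  rw [Real.norm_eq_abs, abs_of_pos (Real.exp_pos _)]
  exact Real.exp_le_one_iff.2 (neg_nonpos.2 (pot_nonneg u y))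

lemma normConst_le_one {X : Type*} [MeasurableSpace X] (μ₀ : Measure X)
    [IsProbabilityMeasure μ₀] {m : ℕ} {G : X → EuclideanSpace ℝ (Fin m)}
    (hGmeas : Measurable G) (y : EuclideanSpace ℝ (Fin m)) :
    normConst μ₀ G y ≤ 1 := by
  have := integral_mono (exp_pot_integrable μ₀ hGmeas y) (integrable_const (1:ℝ))
    (fun u => Real.exp_le_one_iff.2 (neg_nonpos.2 (pot_nonneg u y)))
  simpa [normConst] using this

lemma normConst_ge {X : Type*} [MeasurableSpace X] (μ₀ : Measure X)
    [IsProbabilityMeasure μ₀] {m : ℕ} {G : X → EuclideanSpace ℝ (Fin m)}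
    (hGmeas : Measurable G) {M ρ : ℝ} (hGbdd : ∀ u, ‖G u‖ ≤ M)
    {y : EuclideanSpace ℝ (Fin m)} (hy : ‖y‖ ≤ ρ) :
    Real.exp (-((M + ρ) ^ 2 / 2)) ≤ normConst μ₀ G y := by
  have := integral_mono (integrable_const (μ := μ₀) (Real.exp (-((M + ρ) ^ 2 / 2))))
    (exp_pot_integrable μ₀ hGmeas y)
    (fun u => Real.exp_le_exp.2 (neg_le_neg (pot_le hGbdd u hy)))
  simpa [normConst] using this

lemma normConst_diff_le {X : Type*} [MeasurableSpace X] (μ₀ : Measure X)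
    [IsProbabilityMeasure μ₀] {m : ℕ} {G : X → EuclideanSpace ℝ (Fin m)}
    (hGmeas : Measurable G) {M ρ : ℝ} (hGbdd : ∀ u, ‖G u‖ ≤ M)
    {y y' : EuclideanSpace ℝ (Fin m)} (hy : ‖y‖ ≤ ρ) (hy' : ‖y'‖ ≤ ρ) :
    |normConst μ₀ G y - normConst μ₀ G y'| ≤ (M + ρ) * ‖y - y'‖ := by
  have h1 := exp_pot_integrable μ₀ hGmeas y
  have h2 := exp_pot_integrable μ₀ hGmeas y'
  unfold normConst
  rw [← integral_sub h1 h2]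
  calc |∫ u, (Real.exp (-lsPotential G u y) - Real.exp (-lsPotential G u y')) ∂μ₀|
      ≤ ∫ u, |Real.exp (-lsPotential G u y) - Real.exp (-lsPotential G u y')| ∂μ₀ :=
        by simpa [Real.norm_eq_abs] using
          norm_integral_le_integral_norm (μ := μ₀)
            (fun u => Real.exp (-lsPotential G u y) - Real.exp (-lsPotential G u y'))
    _ ≤ ∫ _u, (M + ρ) * ‖y - y'‖ ∂μ₀ := by
        refine integral_mono ((h1.sub h2).abs) (integrable_const _) (fun u => ?_)
        calc |Real.exp (-lsPotential G u y) - Real.exp (-lsPotential G u y')|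
            ≤ |lsPotential G u y - lsPotential G u y'| :=
              aux_exp_lip (pot_nonneg u y) (pot_nonneg u y')
          _ ≤ (M + ρ) * ‖y - y'‖ := pot_diff_le hGbdd u hy hy'
    _ = (M + ρ) * ‖y - y'‖ := by simp

theorem stmt12 {X : Type*} [MeasurableSpace X] (μ₀ : Measure X) [IsProbabilityMeasure μ₀]
    (m : ℕ) (G : X → EuclideanSpace ℝ (Fin m)) (hGmeas : Measurable G)
    (M : ℝ) (hM : 0 ≤ M) (hGbdd : ∀ u, ‖G u‖ ≤ M) :
    (∀ y : EuclideanSpace ℝ (Fin m), 0 < normConst μ₀ G y) ∧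
      ∀ ρ > (0 : ℝ), ∃ C > (0 : ℝ), ∀ y y' : EuclideanSpace ℝ (Fin m),
        ‖y‖ ≤ ρ → ‖y'‖ ≤ ρ →
        Real.sqrt ((1 / 2 : ℝ) * ∫ u,
            (Real.sqrt (Real.exp (-lsPotential G u y) / normConst μ₀ G y) -
              Real.sqrt (Real.exp (-lsPotential G u y') / normConst μ₀ G y')) ^ 2 ∂μ₀)
          ≤ C * ‖y - y'‖ := by
  constructor
  · intro y
    exact (Real.exp_pos _).trans_le (normConst_ge μ₀ hGmeas hGbdd (le_refl ‖y‖))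
  intro ρ hρ
  set c : ℝ := Real.exp (-((M + ρ) ^ 2 / 2)) with hc_def
  have hc : 0 < c := Real.exp_pos _
  have hc1 : c ≤ 1 := Real.exp_le_one_iff.2 (neg_nonpos.2 (by positivity))
  have hMρ : 0 < M + ρ := by linarith
  set L : ℝ := (M + ρ) / (c ^ 2 * Real.sqrt c) with hL_def
  have hL : 0 < L := div_pos hMρ (by positivity)
  refine ⟨L, hL, fun y y' hy hy' => ?_⟩
  set D := ‖y - y'‖ with hD_def
  have hD : 0 ≤ D := norm_nonneg _
  set Z := normConst μ₀ G y with hZ_def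
  set Z' := normConst μ₀ G y' with hZ'_def
  have hZge : c ≤ Z := normConst_ge μ₀ hGmeas hGbdd hy
  have hZ'ge : c ≤ Z' := normConst_ge μ₀ hGmeas hGbdd hy'
  have hZle : Z ≤ 1 := normConst_le_one μ₀ hGmeas y
  have hZ'le : Z' ≤ 1 := normConst_le_one μ₀ hGmeas y'
  have hZpos : 0 < Z := hc.trans_le hZge
  have hZ'pos : 0 < Z' := hc.trans_le hZ'ge
  have hZd : |Z - Z'| ≤ (M + ρ) * D := normConst_diff_le μ₀ hGmeas hGbdd hy hy'
  -- pointwise bound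
  have key : ∀ u, (Real.sqrt (Real.exp (-lsPotential G u y) / Z) -
      Real.sqrt (Real.exp (-lsPotential G u y') / Z')) ^ 2 ≤ (L * D) ^ 2 := by
    intro u
    set a := Real.exp (-lsPotential G u y) with ha_def
    set a' := Real.exp (-lsPotential G u y') with ha'_def
    have hca : c ≤ a := Real.exp_le_exp.2 (neg_le_neg (pot_le hGbdd u hy))
    have hca' : c ≤ a' := Real.exp_le_exp.2 (neg_le_neg (pot_le hGbdd u hy'))
    have ha1 : a ≤ 1 := Real.exp_le_one_iff.2 (neg_nonpos.2 (pot_nonneg u y))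
    have ha'1 : a' ≤ 1 := Real.exp_le_one_iff.2 (neg_nonpos.2 (pot_nonneg u y'))
    have had : |a - a'| ≤ (M + ρ) * D :=
      (aux_exp_lip (pot_nonneg u y) (pot_nonneg u y')).trans (pot_diff_le hGbdd u hy hy')
    have hcs : c ≤ a / Z := by
      rw [le_div_iff₀ hZpos]; nlinarith
    have hct : c ≤ a' / Z' := by
      rw [le_div_iff₀ hZ'pos]; nlinarith
    have hnum : |a * Z' - a' * Z| ≤ 2 * (M + ρ) * D := by
      have hrw : a * Z' - a' * Z = (a - a') * Z' + a' * (Z' - Z) := by ring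
      rw [hrw]
      calc |(a - a') * Z' + a' * (Z' - Z)|
          ≤ |(a - a') * Z'| + |a' * (Z' - Z)| := abs_add_le _ _
        _ = |a - a'| * Z' + a' * |Z' - Z| := by
            rw [abs_mul, abs_mul, abs_of_pos hZ'pos, abs_of_pos (hc.trans_le hca')]
        _ ≤ ((M + ρ) * D) * 1 + 1 * ((M + ρ) * D) := by
            rw [abs_sub_comm Z' Z]
            apply add_le_add
            · exact mul_le_mul had hZ'le hZ'pos.le (by positivity)
            · exact mul_le_mul ha'1 hZd (abs_nonneg _) zero_le_one
        _ = 2 * (M + ρ) * D := by ring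
    have hst : |a / Z - a' / Z'| ≤ 2 * (M + ρ) * D / c ^ 2 := by
      have hrw : a / Z - a' / Z' = (a * Z' - a' * Z) / (Z * Z') := by
        field_simp
      rw [hrw, abs_div, abs_of_pos (mul_pos hZpos hZ'pos)]
      have hcc : c ^ 2 ≤ Z * Z' := by nlinarith
      exact div_le_div₀ (by positivity) hnum (by positivity) hcc
    have hsq : |Real.sqrt (a / Z) - Real.sqrt (a' / Z')| ≤ L * D := by
      have h1 := aux_sqrt_lip hc hcs hct
      have h2 : |a / Z - a' / Z'| / (2 * Real.sqrt c) ≤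
          (2 * (M + ρ) * D / c ^ 2) / (2 * Real.sqrt c) := by
        apply div_le_div_of_nonneg_right hst (by positivity)
      have h3 : (2 * (M + ρ) * D / c ^ 2) / (2 * Real.sqrt c) = L * D := by
        rw [hL_def]; field_simp
      calc |Real.sqrt (a / Z) - Real.sqrt (a' / Z')|
          ≤ |a / Z - a' / Z'| / (2 * Real.sqrt c) := h1
        _ ≤ (2 * (M + ρ) * D / c ^ 2) / (2 * Real.sqrt c) := h2
        _ = L * D := h3
    calc (Real.sqrt (a / Z) - Real.sqrt (a' / Z')) ^ 2
        = |Real.sqrt (a / Z) - Real.sqrt (a' / Z')| ^ 2 := (sq_abs _).symm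
      _ ≤ (L * D) ^ 2 := by
          apply pow_le_pow_left₀ (abs_nonneg _) hsq
  -- integrate the pointwise bound
  have hint : ∫ u, (Real.sqrt (Real.exp (-lsPotential G u y) / Z) -
      Real.sqrt (Real.exp (-lsPotential G u y') / Z')) ^ 2 ∂μ₀ ≤ (L * D) ^ 2 := by
    have := integral_mono_of_nonneg (μ := μ₀)
      (f := fun u => (Real.sqrt (Real.exp (-lsPotential G u y) / Z) -
        Real.sqrt (Real.exp (-lsPotential G u y') / Z')) ^ 2)
      (g := fun _ => (L * D) ^ 2)
      (Filter.Eventually.of_forall fun u => sq_nonneg _)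
      (integrable_const _)
      (Filter.Eventually.of_forall key)
    simpa using this
  have hnonneg : 0 ≤ ∫ u, (Real.sqrt (Real.exp (-lsPotential G u y) / Z) -
      Real.sqrt (Real.exp (-lsPotential G u y') / Z')) ^ 2 ∂μ₀ :=
    integral_nonneg fun u => sq_nonneg _
  calc Real.sqrt ((1 / 2 : ℝ) * ∫ u, (Real.sqrt (Real.exp (-lsPotential G u y) / Z) -
        Real.sqrt (Real.exp (-lsPotential G u y') / Z')) ^ 2 ∂μ₀)
      ≤ Real.sqrt ((L * D) ^ 2) := Real.sqrt_le_sqrt (by linarith)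
    _ = L * D := Real.sqrt_sq (by positivity)
end
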